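/- Let f : ℕ → ℂ be eventually periodic and multiplicative. Then either f is periodic on the positive integers (there exists d ≥ 1 with f(n+d) = f(n) for all n ≥ 1), or f is finitely supported (the set {n ≥ 1 : f(n) ≠ 0} is finite). -/

import Mathlib

/-- A sequence `f : ℕ → ℂ` is `lam`-automatic if its `lam`-kernel is finite. -/
def IsAutomatic (lam : ℕ) (f : ℕ → ℂ) : Prop :=
  {g : ℕ → ℂ | ∃ k r : ℕ, r < lam ^ k ∧ g = fun n => f (lam ^ k * n + r)}.Finite

/-- A sequence is multiplicative if `f 1 = 1` and `f (m*n) = f m * f n` for coprime `m n ≥ 1`. -/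
def IsMultiplicativeSeq (f : ℕ → ℂ) : Prop :=
  f 1 = 1 ∧ ∀ m n : ℕ, 1 ≤ m → 1 ≤ n → Nat.Coprime m n → f (m * n) = f m * f n

/-- Eventually periodic sequence. -/
def EventuallyPeriodicSeq (f : ℕ → ℂ) : Prop :=
  ∃ d : ℕ, 1 ≤ d ∧ ∃ n₀ : ℕ, ∀ n ≥ n₀, f (n + d) = f n

/-- A Dirichlet character of modulus `k`: `k`-periodic, completely multiplicative,
and vanishing exactly at arguments not coprime to `k`. -/
def IsDirichletCharacterSeq (k : ℕ) (χ : ℕ → ℂ) : Prop :=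
  (∀ n : ℕ, χ (n + k) = χ n) ∧ (∀ m n : ℕ, χ (m * n) = χ m * χ n) ∧
    (∀ n : ℕ, χ n = 0 ↔ 1 < Nat.gcd n k)


lemma split_aux (a b : ℕ) (ha : a ≠ 0) (hb : b ≠ 0) :
    Nat.Coprime (a / Nat.gcd a (b ^ a)) b ∧
      ∀ p : ℕ, p.Prime → p ∣ b → p ∣ b ^ a / Nat.gcd a (b ^ a) := by
  set g := Nat.gcd a (b ^ a) with hgdef
  have hba : b ^ a ≠ 0 := pow_ne_zero _ hb
  have hga : g ∣ a := Nat.gcd_dvd_left _ _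
  have hgb : g ∣ b ^ a := Nat.gcd_dvd_right _ _
  have hg : g ≠ 0 := Nat.gcd_ne_zero_left ha
  have hkey : ∀ p : ℕ, p.Prime → p ∣ b →
      g.factorization p = a.factorization p ∧ a.factorization p < a * b.factorization p := by
    intro p hp hpb
    have h1 : 1 ≤ b.factorization p := (hp.factorization_pos_of_dvd hb hpb)
    have h2 : a.factorization p < a := Nat.factorization_lt p ha
    have h3 : a.factorization p < a * b.factorization p :=
      lt_of_lt_of_le h2 (Nat.le_mul_of_pos_right a h1)
    constructor
    · rw [hgdef, Nat.factorization_gcd ha hba]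
      simp only [Finsupp.inf_apply, Nat.factorization_pow, Finsupp.smul_apply, smul_eq_mul]
      exact min_eq_left h3.le
    · exact h3
  constructor
  · by_contra hcop
    obtain ⟨p, hp, hpd⟩ := Nat.exists_prime_and_dvd hcop
    have hpag : p ∣ a / g := hpd.trans (Nat.gcd_dvd_left _ _)
    have hpb : p ∣ b := hpd.trans (Nat.gcd_dvd_right _ _)
    have hne : a / g ≠ 0 := Nat.div_ne_zero_iff_of_dvd hga |>.mpr ⟨ha, hg⟩
    rw [Nat.Prime.dvd_iff_one_le_factorization hp hne, Nat.factorization_div hga,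
      Finsupp.tsub_apply, (hkey p hp hpb).1] at hpag
    omega
  · intro p hp hpb
    have hne : b ^ a / g ≠ 0 := Nat.div_ne_zero_iff_of_dvd hgb |>.mpr ⟨hba, hg⟩
    rw [Nat.Prime.dvd_iff_one_le_factorization hp hne, Nat.factorization_div hgb,
      Finsupp.tsub_apply, (hkey p hp hpb).1, Nat.factorization_pow, Finsupp.smul_apply,
      smul_eq_mul]
    have := (hkey p hp hpb).2
    omega

lemma exists_coprime_in_AP (u e N B : ℕ) (hu : u ≠ 0) (he : e ≠ 0) (hN : N ≠ 0)
    (hue : Nat.Coprime u e) :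
    ∃ b k : ℕ, b = u + k * e ∧ B ≤ b ∧ Nat.Coprime b N ∧ Nat.Coprime b e := by
  obtain ⟨hcop, -⟩ := split_aux N e hN he
  set g := Nat.gcd N (e ^ N) with hgdef
  set N₁ := N / g with hN₁def
  have hgdvd : g ∣ e ^ N := Nat.gcd_dvd_right _ _
  have hNeq : N₁ * g = N := Nat.div_mul_cancel (Nat.gcd_dvd_left _ _)
  have hN₁pos : 0 < N₁ := by
    rcases Nat.eq_zero_or_pos N₁ with h | h
    · rw [h, zero_mul] at hNeq; exact absurd hNeq.symm hN
    · exact h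
  -- any element of the AP is coprime to e and to g
  have hAPe : ∀ k : ℕ, Nat.Coprime (u + k * e) e :=
    fun k => (Nat.coprime_add_mul_right_left u e k).mpr hue
  have hAPg : ∀ k : ℕ, Nat.Coprime (u + k * e) g :=
    fun k => Nat.Coprime.coprime_dvd_right hgdvd ((hAPe k).pow_right N)
  rcases eq_or_lt_of_le (Nat.one_le_iff_ne_zero.mpr hN₁pos.ne') with h1 | h1
  · -- N₁ = 1 : N = g
    refine ⟨u + B * e, B, rfl, ?_, ?_, hAPe B⟩
    · have : B ≤ B * e := Nat.le_mul_of_pos_right B (Nat.pos_of_ne_zero he)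
      omega
    · have : N = g := by rw [← hNeq, ← h1]; simp
      rw [this]; exact hAPg B
  · -- N₁ > 1
    obtain ⟨k₀, -, hk₀⟩ := Nat.exists_mul_mod_eq_one_of_coprime hcop.symm h1
    set q := e * k₀ / N₁ with hqdef
    have hq : e * k₀ = N₁ * q + 1 := by
      conv_lhs => rw [← Nat.div_add_mod (e * k₀) N₁]
      rw [hk₀]
    set r := u % N₁ with hrdef
    set U := u / N₁ with hUdef
    have hr : r < N₁ := Nat.mod_lt _ hN₁pos
    have hur : N₁ * U + r = u := Nat.div_add_mod u N₁
    set c := N₁ + 1 - r with hcdef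
    set k := k₀ * c + N₁ * B with hkdef
    set b := u + k * e with hbdef
    have hb : b = 1 + N₁ * (U + 1 + c * q + B * e) := by
      have h2 : b = u + c * (e * k₀) + N₁ * (B * e) := by rw [hbdef, hkdef]; ring
      rw [hq] at h2
      rw [h2, ← hur, hcdef]
      zify [hr.le, Nat.le_of_lt_succ (Nat.lt_succ_of_lt hr)]
      push_cast [Nat.sub_add_cancel]
      rw [Nat.cast_sub (by omega)]
      push_cast
      ring
    have hcopN₁ : Nat.Coprime b N₁ := by
      rw [hb]
      exact (Nat.coprime_add_mul_left_left 1 N₁ _).mpr (Nat.coprime_one_left _)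
    refine ⟨b, k, rfl, ?_, ?_, hAPe k⟩
    · have h3 : k ≤ k * e := Nat.le_mul_of_pos_right k (Nat.pos_of_ne_zero he)
      have h4 : B ≤ N₁ * B := Nat.le_mul_of_pos_left B hN₁pos
      omega
    · rw [← hNeq]
      exact Nat.Coprime.mul_right hcopN₁ (hAPg k)

theorem stmt_5' (f : ℕ → ℂ) (hep : ∃ d : ℕ, 1 ≤ d ∧ ∃ n₀ : ℕ, ∀ n ≥ n₀, f (n + d) = f n)
    (hm : f 1 = 1 ∧ ∀ m n : ℕ, 1 ≤ m → 1 ≤ n → Nat.Coprime m n → f (m * n) = f m * f n) :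
    (∃ d : ℕ, 1 ≤ d ∧ ∀ n : ℕ, 1 ≤ n → f (n + d) = f n) ∨
      {n : ℕ | 1 ≤ n ∧ f n ≠ 0}.Finite := by
  by_cases hfin : {n : ℕ | 1 ≤ n ∧ f n ≠ 0}.Finite
  · exact Or.inr hfin
  left
  obtain ⟨-, hmul⟩ := hm
  obtain ⟨d, hd, n₀, hper⟩ := hep
  have hA : ∀ j n, n₀ ≤ n → f (n + j * d) = f n := by
    intro j
    induction j with
    | zero => intro n _; simp
    | succ j ih =>
      intro n hn
      have h1 : n + (j + 1) * d = (n + j * d) + d := by ring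
      rw [h1, hper _ (by omega), ih n hn]
  obtain ⟨m₀, hm₀mem, hm₀gt⟩ := Set.Infinite.exists_gt hfin n₀
  obtain ⟨hm₀1, hfm₀⟩ := hm₀mem
  have hm₀0 : m₀ ≠ 0 := by omega
  have hd0 : d ≠ 0 := by omega
  obtain ⟨hucop, hpe⟩ := split_aux m₀ d hm₀0 hd0
  set v := Nat.gcd m₀ (d ^ m₀) with hvdef
  set u := m₀ / v with hudef
  set e := d ^ m₀ / v with hedef
  have hvdvd : v ∣ m₀ := Nat.gcd_dvd_left _ _
  have hvdvd' : v ∣ d ^ m₀ := Nat.gcd_dvd_right _ _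
  have hv0 : v ≠ 0 := Nat.gcd_ne_zero_left hm₀0
  have huv : v * u = m₀ := Nat.mul_div_cancel' hvdvd
  have hve : v * e = d ^ m₀ := Nat.mul_div_cancel' hvdvd'
  have hu0 : u ≠ 0 := by
    intro h; rw [h, mul_zero] at huv; exact hm₀0 huv.symm
  have he0 : e ≠ 0 := by
    intro h; rw [h, mul_zero] at hve; exact (pow_ne_zero m₀ hd0) hve.symm
  have hedvd : e ∣ d ^ m₀ := ⟨v, by rw [← hve]; ring⟩
  have hue : Nat.Coprime u e :=
    Nat.Coprime.coprime_dvd_right hedvd (hucop.pow_right m₀)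
  refine ⟨d ^ m₀, Nat.one_le_pow _ _ (by omega), ?_⟩
  intro n hn
  set N := n * (n + d ^ m₀) with hNdef
  have hN0 : N ≠ 0 := by
    have : 0 < n * (n + d ^ m₀) := Nat.mul_pos (by omega) (by omega)
    omega
  obtain ⟨b, k, hbk, hbB, hbN, hbe⟩ := exists_coprime_in_AP u e N (n₀ + 1) hu0 he0 hN0 hue
  have hbn : Nat.Coprime b n := hbN.coprime_dvd_right ⟨n + d ^ m₀, rfl⟩
  have hbn' : Nat.Coprime b (n + d ^ m₀) := hbN.coprime_dvd_right ⟨n, by rw [hNdef]; ring⟩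
  have hb1 : 1 ≤ b := by omega
  have hpow : d ^ (m₀ - 1) * d = d ^ m₀ := by
    rw [← pow_succ]; congr 1; omega
  have hvb : Nat.Coprime v b := by
    by_contra h
    obtain ⟨p, hp, hpd⟩ := Nat.exists_prime_and_dvd h
    have hpv : p ∣ v := hpd.trans (Nat.gcd_dvd_left _ _)
    have hpb : p ∣ b := hpd.trans (Nat.gcd_dvd_right _ _)
    have hpd' : p ∣ d := hp.dvd_of_dvd_pow (hpv.trans hvdvd')
    have hpe' : p ∣ e := hpe p hp hpd'
    have h1 : p ∣ Nat.gcd b e := Nat.dvd_gcd hpb hpe'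
    rw [Nat.Coprime] at hbe
    rw [hbe] at h1
    exact hp.ne_one (Nat.dvd_one.mp h1)
  have hkey : f v * f b = f m₀ := by
    rw [← hmul v b (by omega) hb1 hvb]
    have h2 : v * b = m₀ + (k * d ^ (m₀ - 1)) * d := by
      rw [hbk]
      calc v * (u + k * e) = v * u + k * (v * e) := by ring
        _ = m₀ + k * d ^ m₀ := by rw [huv, hve]
        _ = m₀ + k * d ^ (m₀ - 1) * d := by rw [mul_assoc, hpow]
    rw [h2, hA _ m₀ (by omega)]
  have hfb : f b ≠ 0 := fun h => hfm₀ (by rw [← hkey, h, mul_zero])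
  have e1 : f (b * n) = f b * f n := hmul b n hb1 hn hbn
  have e2 : f (b * (n + d ^ m₀)) = f b * f (n + d ^ m₀) := hmul b _ hb1 (by omega) hbn'
  have e3 : b * (n + d ^ m₀) = b * n + (b * d ^ (m₀ - 1)) * d := by
    rw [mul_add, mul_assoc, hpow]
  have hbn₀ : n₀ ≤ b * n := by
    have : b ≤ b * n := Nat.le_mul_of_pos_right b (by omega)
    omega
  have e4 : f (b * n + (b * d ^ (m₀ - 1)) * d) = f (b * n) := hA _ _ hbn₀
  have e5 : f b * f (n + d ^ m₀) = f b * f n := by rw [← e2, e3, e4, e1]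
  exact mul_left_cancel₀ hfb e5


theorem stmt_5 (f : ℕ → ℂ) (hep : EventuallyPeriodicSeq f)
    (hm : IsMultiplicativeSeq f) :
    (∃ d : ℕ, 1 ≤ d ∧ ∀ n : ℕ, 1 ≤ n → f (n + d) = f n) ∨
      {n : ℕ | 1 ≤ n ∧ f n ≠ 0}.Finite :=
  stmt_5' f hep hm
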